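/- arXiv:1602.07077 — 4 statements merged into one kernel-verified Lean document; each statement's English description precedes it below -/
import Mathlib

section
/- Let $A$ be a (possibly unbounded) self-adjoint operator in a complex Hilbert space $X$ with spectral measure $E_A$, let $\{m_n\}$ be a positive sequence satisfying (WGR) with Mandelbrojt function $T$, and let $f\in C^\infty(A)$ satisfy $\|A^n f\|\le c\alpha^n m_n$ for all $n$, for some $c,\alpha>0$. Then $f \in D(T(\tfrac{1}{2\alpha}|A|))$, where $T(\tfrac{1}{2\alpha}|A|) := \int_{\mathbb{R}} T(\tfrac{1}{2\alpha}|\lambda|)\, dE_A(\lambda)$ is defined by the functional calculus. -/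
open MeasureTheory

/-- Cauchy–Schwarz with geometric weights: `(∑' a)² ≤ 2 * ∑' 2ⁿ aₙ²`. -/
lemma tsum_sq_le_two_mul (a : ℕ → ℝ) (hsum : Summable a)
    (hb : Summable fun n => 2 ^ n * a n ^ 2) :
    (∑' n, a n) ^ 2 ≤ 2 * ∑' n, 2 ^ n * a n ^ 2 := by
  have key : ∀ s : Finset ℕ, (∑ i ∈ s, a i) ^ 2 ≤ 2 * ∑' n, 2 ^ n * a n ^ 2 := by
    intro s
    have hcs := Finset.sum_mul_sq_le_sq_mul_sq s
      (fun i => ((Real.sqrt 2)⁻¹) ^ i) (fun i => (Real.sqrt 2) ^ i * a i)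
    have hsqrt2 : (0:ℝ) < Real.sqrt 2 := Real.sqrt_pos.mpr (by norm_num)
    have h1 : ∀ i, ((Real.sqrt 2)⁻¹) ^ i * ((Real.sqrt 2) ^ i * a i) = a i := by
      intro i
      rw [← mul_assoc, ← mul_pow, inv_mul_cancel₀ (ne_of_gt hsqrt2), one_pow, one_mul]
    have h2 : ∀ i, (((Real.sqrt 2)⁻¹) ^ i) ^ 2 = (1/2 : ℝ) ^ i := by
      intro i
      rw [← pow_mul, mul_comm i 2, pow_mul, inv_pow, Real.sq_sqrt (by norm_num : (0:ℝ) ≤ 2)]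
      norm_num
    have h3 : ∀ i, ((Real.sqrt 2) ^ i * a i) ^ 2 = 2 ^ i * a i ^ 2 := by
      intro i
      rw [mul_pow, ← pow_mul, mul_comm i 2, pow_mul, Real.sq_sqrt (by norm_num : (0:ℝ) ≤ 2)]
    simp only [h1, h2, h3] at hcs
    refine hcs.trans ?_
    have hle1 : (∑ i ∈ s, (1/2:ℝ) ^ i) ≤ 2 := by
      have := Summable.sum_le_tsum s (fun i _ => by positivity) summable_geometric_two
      rwa [tsum_geometric_two] at this
    have hle2 : (∑ i ∈ s, (2:ℝ) ^ i * a i ^ 2) ≤ ∑' n, 2 ^ n * a n ^ 2 :=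
      Summable.sum_le_tsum s (fun i _ => by positivity) hb
    exact mul_le_mul hle1 hle2 (Finset.sum_nonneg fun i _ => by positivity) (by norm_num)
  have ht : Filter.Tendsto (fun s : Finset ℕ => (∑ i ∈ s, a i) ^ 2) Filter.atTop
      (nhds ((∑' n, a n) ^ 2)) := hsum.hasSum.pow 2
  exact le_of_tendsto' ht key




/-- Pointwise Cauchy–Schwarz bound for the Mandelbrojt function. -/
lemma pointwise_bd (m : ℕ → ℝ) (hm : ∀ n, 0 < m n)
    (hWGR : ∀ β : ℝ, 0 < β → ∃ c : ℝ, 0 < c ∧ ∀ n : ℕ, c * β ^ n ≤ m n)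
    (T : ℝ → ℝ) (hT : ∀ l : ℝ, T l = m 0 * ∑' n : ℕ, l ^ n / m n)
    (α : ℝ) (hα : 0 < α) (l : ℝ) :
    ENNReal.ofReal ((T ((1 / (2 * α)) * |l|)) ^ 2) ≤
      ∑' n : ℕ, ENNReal.ofReal (2 * m 0 ^ 2 / ((2 * α ^ 2) ^ n * m n ^ 2) * l ^ (2 * n)) := by
  set x : ℝ := (1 / (2 * α)) * |l| with hxdef
  have hx0 : 0 ≤ x := by positivity
  obtain ⟨c₁, hc₁, hwgr⟩ := hWGR (2 * x + 1) (by positivity)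
  set a : ℕ → ℝ := fun n => x ^ n / m n with hadef
  have ha0 : ∀ n, 0 ≤ a n := fun n => div_nonneg (by positivity) (hm n).le
  have h2x : ∀ n : ℕ, ((1:ℝ)/2) ^ n * (2*x) ^ n = x ^ n := by
    intro n; rw [← mul_pow]; congr 1; ring
  have hkey : ∀ n, a n ≤ (1/2 : ℝ) ^ n / c₁ := by
    intro n
    rw [hadef]
    rw [div_le_div_iff₀ (hm n) hc₁]
    calc x ^ n * c₁ = (1/2:ℝ) ^ n * (2*x) ^ n * c₁ := by rw [h2x]
      _ ≤ (1/2:ℝ) ^ n * (2*x+1) ^ n * c₁ := by gcongr; linarith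
      _ = (1/2:ℝ) ^ n * (c₁ * (2*x+1) ^ n) := by ring
      _ ≤ (1/2:ℝ) ^ n * m n :=
          mul_le_mul_of_nonneg_left (hwgr n) (by positivity)
  have hsa : Summable a :=
    Summable.of_nonneg_of_le ha0 hkey (summable_geometric_two.div_const c₁)
  have hkey2 : ∀ n, 2 ^ n * a n ^ 2 ≤ (1/2:ℝ) ^ n / c₁ ^ 2 := by
    intro n
    calc 2 ^ n * a n ^ 2 ≤ 2 ^ n * ((1/2:ℝ) ^ n / c₁) ^ 2 := by
          gcongr
          · exact ha0 n
          · exact hkey n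
      _ = (1/2:ℝ) ^ n / c₁ ^ 2 := by
          rw [div_pow, sq ((1/2:ℝ)^n), ← mul_div_assoc, ← mul_assoc, ← mul_pow]
          norm_num
  have hsb : Summable fun n => 2 ^ n * a n ^ 2 :=
    Summable.of_nonneg_of_le (fun n => by positivity) hkey2
      ((summable_geometric_two.div_const (c₁ ^ 2)))
  have hterm : ∀ n : ℕ, 2 * m 0 ^ 2 / ((2 * α ^ 2) ^ n * m n ^ 2) * l ^ (2 * n)
      = 2 * m 0 ^ 2 * (2 ^ n * a n ^ 2) := by
    intro n
    have hman : m n ≠ 0 := (hm n).ne'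
    have hx2 : x ^ 2 = l ^ 2 / (4 * α ^ 2) := by
      have h12 : (1 / (2*α)) ^ 2 = 1 / (4*α^2) := by rw [div_pow, mul_pow]; norm_num
      rw [hxdef, mul_pow, sq_abs, h12]; ring
    rw [hadef]
    have : a n ^ 2 = (x ^ 2) ^ n / m n ^ 2 := by
      rw [hadef, div_pow, ← pow_mul, ← pow_mul, mul_comm n 2]
    rw [this, hx2, div_pow, show ((4:ℝ) * α ^ 2) ^ n = 2 ^ n * (2 * α ^ 2) ^ n by
      rw [show (4:ℝ) * α ^ 2 = 2 * (2 * α ^ 2) by ring, mul_pow], pow_mul]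
    have hne : ((2:ℝ) * α ^ 2) ^ n ≠ 0 := by positivity
    field_simp
  -- total bound in ℝ
  have hTsq : (T x) ^ 2 ≤ ∑' n : ℕ, 2 * m 0 ^ 2 / ((2 * α ^ 2) ^ n * m n ^ 2) * l ^ (2 * n) := by
    have hcs : (∑' n, a n) ^ 2 ≤ 2 * ∑' n, 2 ^ n * a n ^ 2 :=
      tsum_sq_le_two_mul a hsa hsb
    calc (T x) ^ 2 = m 0 ^ 2 * (∑' n, a n) ^ 2 := by rw [hT x, mul_pow]
      _ ≤ m 0 ^ 2 * (2 * ∑' n, 2 ^ n * a n ^ 2) := by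
          have h0 : (0:ℝ) ≤ m 0 ^ 2 := sq_nonneg _
          exact mul_le_mul_of_nonneg_left hcs h0
      _ = 2 * m 0 ^ 2 * ∑' n, 2 ^ n * a n ^ 2 := by ring
      _ = ∑' n, 2 * m 0 ^ 2 * (2 ^ n * a n ^ 2) := tsum_mul_left.symm
      _ = _ := (tsum_congr fun n => (hterm n).symm)
  have hnn : ∀ n : ℕ, 0 ≤ 2 * m 0 ^ 2 / ((2 * α ^ 2) ^ n * m n ^ 2) * l ^ (2 * n) := by
    intro n; rw [hterm n]; positivity
  have hsum' : Summable fun n : ℕ => 2 * m 0 ^ 2 / ((2 * α ^ 2) ^ n * m n ^ 2) * l ^ (2 * n) :=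
    (hsb.mul_left (2 * m 0 ^ 2)).congr fun n => (hterm n).symm
  calc ENNReal.ofReal ((T x) ^ 2)
      ≤ ENNReal.ofReal (∑' n : ℕ, 2 * m 0 ^ 2 / ((2 * α ^ 2) ^ n * m n ^ 2) * l ^ (2 * n)) :=
        ENNReal.ofReal_le_ofReal hTsq
    _ = _ := ENNReal.ofReal_tsum_of_nonneg hnn hsum'



variable {X : Type*} [NormedAddCommGroup X] [InnerProductSpace ℂ X] [CompleteSpace X]

/-- `u` is the sequence of iterates `u n = Aⁿ f` of the (possibly unbounded) operator
`A`; its existence means `f ∈ C^∞(A)`. -/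
def IterSeq (A : X →ₗ.[ℂ] X) (f : X) (u : ℕ → X) : Prop :=
  u 0 = f ∧ ∀ n : ℕ, ∃ h : u n ∈ A.domain, A ⟨u n, h⟩ = u (n + 1)

/-- `E` is the projection-valued spectral measure (supported on `ℝ`) of the
self-adjoint operator `A`, `μ f (s) = ⟨E(s) f, f⟩ = ‖E(s) f‖²` the associated scalar
Borel measures, together with the standard facts of the spectral theorem: the domain of
`Aⁿ` consists of the `f` with `λ ↦ λⁿ` in `L²(μ f)` and `‖Aⁿ f‖² = ∫ λ^(2n) dμ f`. -/
structure IsSpectralMeasureOf (A : X →ₗ.[ℂ] X) (E : Set ℝ → X →L[ℂ] X)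
    (μ : X → Measure ℝ) : Prop where
  empty : E ∅ = 0
  univ : E Set.univ = ContinuousLinearMap.id ℂ X
  inter : ∀ s t : Set ℝ, MeasurableSet s → MeasurableSet t →
    E (s ∩ t) = (E s).comp (E t)
  symm : ∀ s : Set ℝ, MeasurableSet s → ∀ f g : X,
    (inner ℂ (E s f) g : ℂ) = inner ℂ f (E s g)
  countably_additive : ∀ s : ℕ → Set ℝ, (∀ n, MeasurableSet (s n)) →
    Pairwise (Function.onFun Disjoint s) → ∀ f : X,
      HasSum (fun n => E (s n) f) (E (⋃ n, s n) f)
  mu_def : ∀ (f : X) (s : Set ℝ), MeasurableSet s →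
    μ f s = ENNReal.ofReal (‖E s f‖ ^ 2)
  mu_univ : ∀ f : X, μ f Set.univ = ENNReal.ofReal (‖f‖ ^ 2)
  dom_iff : ∀ f : X,
    f ∈ A.domain ↔ (∫⁻ l : ℝ, ENNReal.ofReal (l ^ 2) ∂(μ f)) < ⊤
  inner_A_eq : ∀ f : A.domain, (inner ℂ (A f) (f : X) : ℂ) = ∫ l : ℝ, (l : ℂ) ∂(μ f)
  iter_norm : ∀ (f : X) (u : ℕ → X), IterSeq A f u → ∀ n : ℕ,
    ENNReal.ofReal (‖u n‖ ^ 2) = ∫⁻ l : ℝ, ENNReal.ofReal (l ^ (2 * n)) ∂(μ f)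
  iter_dom : ∀ f : X,
    (∀ n : ℕ, (∫⁻ l : ℝ, ENNReal.ofReal (l ^ (2 * n)) ∂(μ f)) < ⊤) →
      ∃ u : ℕ → X, IterSeq A f u

/-- `f ∈ D(F(A))` for a Borel function `F`, i.e. `F ∈ L²(μ f)` where
`μ f = ⟨E_A(·) f, f⟩`. -/
def MemDom (μ : X → Measure ℝ) (F : ℝ → ℝ) (f : X) : Prop :=
  (∫⁻ l : ℝ, ENNReal.ofReal ((F l) ^ 2) ∂(μ f)) < ⊤

/-- If `A` is self-adjoint with spectral measure `E`, `{m n}`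
satisfies (WGR) with Mandelbrojt function `T`, and `f ∈ C^∞(A)` satisfies
`‖Aⁿ f‖ ≤ c αⁿ m n` for all `n`, then `f ∈ D(T((1/(2α))|A|))`. -/
theorem mem_dom_T_of_carleman (A : X →ₗ.[ℂ] X) (hsa : IsSelfAdjoint A)
    (E : Set ℝ → X →L[ℂ] X) (μ : X → Measure ℝ) (hE : IsSpectralMeasureOf A E μ)
    (m : ℕ → ℝ) (hm : ∀ n, 0 < m n)
    (hWGR : ∀ β : ℝ, 0 < β → ∃ c : ℝ, 0 < c ∧ ∀ n : ℕ, c * β ^ n ≤ m n)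
    (T : ℝ → ℝ) (hT : ∀ l : ℝ, T l = m 0 * ∑' n : ℕ, l ^ n / m n)
    (f : X) (u : ℕ → X) (hu : IterSeq A f u)
    (c α : ℝ) (hc : 0 < c) (hα : 0 < α)
    (hbound : ∀ n : ℕ, ‖u n‖ ≤ c * α ^ n * m n) :
    MemDom μ (fun l => T ((1 / (2 * α)) * |l|)) f := by
  show (∫⁻ l : ℝ, ENNReal.ofReal ((T ((1 / (2 * α)) * |l|)) ^ 2) ∂(μ f)) < ⊤
  set K : ℕ → ℝ := fun n => 2 * m 0 ^ 2 / ((2 * α ^ 2) ^ n * m n ^ 2) with hKdef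
  have hK0 : ∀ n, 0 ≤ K n := fun n => by
    apply div_nonneg (by positivity); positivity
  have hmeas : ∀ n : ℕ, Measurable fun l : ℝ => ENNReal.ofReal (K n * l ^ (2 * n)) :=
    fun n => ((measurable_id.pow_const (2 * n)).const_mul (K n)).ennreal_ofReal
  have hstep : ∀ n : ℕ, (∫⁻ l : ℝ, ENNReal.ofReal (K n * l ^ (2 * n)) ∂(μ f))
      ≤ ENNReal.ofReal (2 * m 0 ^ 2 * c ^ 2 * (1/2) ^ n) := by
    intro n
    have hmeas2 : Measurable fun l : ℝ => ENNReal.ofReal (l ^ (2 * n)) :=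
      (measurable_id.pow_const (2 * n)).ennreal_ofReal
    calc (∫⁻ l : ℝ, ENNReal.ofReal (K n * l ^ (2 * n)) ∂(μ f))
        = ∫⁻ l : ℝ, ENNReal.ofReal (K n) * ENNReal.ofReal (l ^ (2 * n)) ∂(μ f) := by
          simp_rw [ENNReal.ofReal_mul (hK0 n)]
      _ = ENNReal.ofReal (K n) * ∫⁻ l : ℝ, ENNReal.ofReal (l ^ (2 * n)) ∂(μ f) :=
          lintegral_const_mul _ hmeas2
      _ = ENNReal.ofReal (K n) * ENNReal.ofReal (‖u n‖ ^ 2) := by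
          rw [← hE.iter_norm f u hu n]
      _ ≤ ENNReal.ofReal (K n) * ENNReal.ofReal ((c * α ^ n * m n) ^ 2) := by
          gcongr
          exact hbound n
      _ = ENNReal.ofReal (K n * (c * α ^ n * m n) ^ 2) :=
          (ENNReal.ofReal_mul (hK0 n)).symm
      _ = ENNReal.ofReal (2 * m 0 ^ 2 * c ^ 2 * (1/2) ^ n) := by
          congr 1
          have hne : ((2:ℝ) * α ^ 2) ^ n * m n ^ 2 ≠ 0 :=
            ne_of_gt (by have := hm n; positivity)
          rw [hKdef]
          rw [div_mul_eq_mul_div, div_eq_iff hne]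
          rw [show ((2:ℝ) * α ^ 2) ^ n = 2 ^ n * (α ^ n) ^ 2 by
            rw [mul_pow, ← pow_mul, ← pow_mul, mul_comm n 2]]
          have h2 : (1/2:ℝ) ^ n * 2 ^ n = 1 := by
            rw [← mul_pow]; norm_num
          calc 2 * m 0 ^ 2 * (c * α ^ n * m n) ^ 2
              = (2 * m 0 ^ 2 * c ^ 2 * ((1/2:ℝ) ^ n * 2 ^ n)) * ((α ^ n) ^ 2 * m n ^ 2)
                := by rw [h2]; ring
            _ = 2 * m 0 ^ 2 * c ^ 2 * (1/2) ^ n * (2 ^ n * (α ^ n) ^ 2 * m n ^ 2) := by ring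
  calc (∫⁻ l : ℝ, ENNReal.ofReal ((T ((1 / (2 * α)) * |l|)) ^ 2) ∂(μ f))
      ≤ ∫⁻ l : ℝ, ∑' n : ℕ, ENNReal.ofReal (K n * l ^ (2 * n)) ∂(μ f) :=
        lintegral_mono fun l => pointwise_bd m hm hWGR T hT α hα l
    _ = ∑' n : ℕ, ∫⁻ l : ℝ, ENNReal.ofReal (K n * l ^ (2 * n)) ∂(μ f) :=
        lintegral_tsum fun n => (hmeas n).aemeasurable
    _ ≤ ∑' n : ℕ, ENNReal.ofReal (2 * m 0 ^ 2 * c ^ 2 * (1/2) ^ n) :=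
        ENNReal.tsum_le_tsum hstep
    _ = ENNReal.ofReal (∑' n : ℕ, 2 * m 0 ^ 2 * c ^ 2 * (1/2) ^ n) :=
        (ENNReal.ofReal_tsum_of_nonneg (fun n => by positivity)
          (summable_geometric_two.mul_left _)).symm
    _ < ⊤ := ENNReal.ofReal_lt_top
end

section
/- Let $A$ be a self-adjoint operator in a complex Hilbert space with spectral measure $E_A$, $\{m_n\}$ a positive sequence satisfying (WGR), and $T$ its Mandelbrojt function. If $f\in D(T(t|A|))$ for some $t>0$, then $f\in C^\infty(A)$ and there is $c>0$ with $\|A^n f\| \le c\, (1/t)^n m_n$ for all $n\in\mathbb{Z}_+$; in particular $f\in C_{\{m_n\}}(A)$. -/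
open MeasureTheory

variable {X : Type*} [NormedAddCommGroup X] [InnerProductSpace ℂ X] [CompleteSpace X]

/-- If `f ∈ D(T(t|A|))` for some `t > 0`, then `f ∈ C^∞(A)` and
`‖Aⁿ f‖ ≤ c (1/t)ⁿ m n` for all `n`; in particular `f ∈ C_{m_n}(A)`. -/
theorem carleman_of_mem_dom_T (A : X →ₗ.[ℂ] X) (hsa : IsSelfAdjoint A)
    (E : Set ℝ → X →L[ℂ] X) (μ : X → Measure ℝ) (hE : IsSpectralMeasureOf A E μ)
    (m : ℕ → ℝ) (hm : ∀ n, 0 < m n)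
    (hWGR : ∀ β : ℝ, 0 < β → ∃ c : ℝ, 0 < c ∧ ∀ n : ℕ, c * β ^ n ≤ m n)
    (T : ℝ → ℝ) (hT : ∀ l : ℝ, T l = m 0 * ∑' n : ℕ, l ^ n / m n)
    (f : X) (t : ℝ) (ht : 0 < t)
    (hf : MemDom μ (fun l => T (t * |l|)) f) :
    ∃ u : ℕ → X, IterSeq A f u ∧
      ∃ c : ℝ, 0 < c ∧ ∀ n : ℕ, ‖u n‖ ≤ c * (1 / t) ^ n * m n := by
  have hm0 := hm 0
  set I := ∫⁻ l : ℝ, ENNReal.ofReal ((T (t * |l|)) ^ 2) ∂(μ f) with hIdef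
  have hI : I < ⊤ := hf
  -- pointwise key inequality
  have key : ∀ (n : ℕ) (l : ℝ),
      l ^ (2 * n) ≤ (m n / (m 0 * t ^ n)) ^ 2 * (T (t * |l|)) ^ 2 := by
    intro n l
    have hβ : (0:ℝ) < t * |l| + 1 := by positivity
    obtain ⟨c, hc, hcm⟩ := hWGR _ hβ
    have hr0 : (0:ℝ) ≤ t * |l| := by positivity
    have hr : t * |l| < t * |l| + 1 := by linarith
    have hsum : Summable (fun k : ℕ => (t * |l|) ^ k / m k) := by
      have hgeo : Summable (fun k : ℕ => (1 / c) * ((t * |l|) / (t * |l| + 1)) ^ k) :=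
        (summable_geometric_of_lt_one (by positivity)
          ((div_lt_one hβ).mpr hr)).mul_left _
      refine Summable.of_nonneg_of_le (fun k => div_nonneg (by positivity) (hm k).le) (fun k => ?_) hgeo
      have h1 : c * (t * |l| + 1) ^ k ≤ m k := hcm k
      have h2 : (0:ℝ) < c * (t * |l| + 1) ^ k := by positivity
      calc (t * |l|) ^ k / m k ≤ (t * |l|) ^ k / (c * (t * |l| + 1) ^ k) :=
            div_le_div_of_nonneg_left (by positivity) h2 h1
        _ = (1 / c) * ((t * |l|) / (t * |l| + 1)) ^ k := by
            rw [div_pow]; field_simp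
    have hterm : (t * |l|) ^ n / m n ≤ ∑' k : ℕ, (t * |l|) ^ k / m k :=
      Summable.le_tsum hsum n (fun j _ => div_nonneg (by positivity) (hm j).le)
    have hSnn : (0:ℝ) ≤ ∑' k : ℕ, (t * |l|) ^ k / m k :=
      tsum_nonneg (fun k => div_nonneg (by positivity) (hm k).le)
    set S := ∑' k : ℕ, (t * |l|) ^ k / m k with hS
    have h4 : (t * |l|) ^ n ≤ S * m n := (div_le_iff₀ (hm n)).mp hterm
    rw [mul_pow] at h4
    have ht' : (0:ℝ) < t ^ n := by positivity
    have habs : (0:ℝ) ≤ |l| ^ n := by positivity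
    have h3 : |l| ^ n ≤ (m n / (m 0 * t ^ n)) * T (t * |l|) := by
      rw [hT, ← hS, div_mul_eq_mul_div, le_div_iff₀ (mul_pos hm0 ht')]
      nlinarith [mul_le_mul_of_nonneg_right h4 hm0.le]
    have h5 : (0:ℝ) ≤ |l| ^ n := by positivity
    calc l ^ (2 * n) = (|l| ^ n) ^ 2 := by
          rw [pow_mul, ← sq_abs, ← pow_mul, ← pow_mul, Nat.mul_comm]
      _ ≤ ((m n / (m 0 * t ^ n)) * T (t * |l|)) ^ 2 := pow_le_pow_left₀ h5 h3 2
      _ = (m n / (m 0 * t ^ n)) ^ 2 * (T (t * |l|)) ^ 2 := mul_pow _ _ _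
  -- integral bound
  have hint : ∀ n : ℕ, (∫⁻ l : ℝ, ENNReal.ofReal (l ^ (2 * n)) ∂(μ f)) ≤
      ENNReal.ofReal ((m n / (m 0 * t ^ n)) ^ 2) * I := by
    intro n
    rw [hIdef, ← MeasureTheory.lintegral_const_mul' _ _ ENNReal.ofReal_ne_top]
    refine MeasureTheory.lintegral_mono fun l => ?_
    calc ENNReal.ofReal (l ^ (2 * n))
        ≤ ENNReal.ofReal ((m n / (m 0 * t ^ n)) ^ 2 * (T (t * |l|)) ^ 2) :=
          ENNReal.ofReal_le_ofReal (key n l)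
      _ = ENNReal.ofReal ((m n / (m 0 * t ^ n)) ^ 2) *
          ENNReal.ofReal ((T (t * |l|)) ^ 2) := ENNReal.ofReal_mul (by positivity)
  have hfin : ∀ n : ℕ, (∫⁻ l : ℝ, ENNReal.ofReal (l ^ (2 * n)) ∂(μ f)) < ⊤ :=
    fun n => lt_of_le_of_lt (hint n)
      (ENNReal.mul_lt_top ENNReal.ofReal_lt_top hI)
  obtain ⟨u, hu⟩ := hE.iter_dom f hfin
  refine ⟨u, hu, Real.sqrt I.toReal / m 0 + 1,
    add_pos_of_nonneg_of_pos (div_nonneg (Real.sqrt_nonneg _) hm0.le) one_pos, fun n => ?_⟩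
  have h6 : ENNReal.ofReal (‖u n‖ ^ 2) ≤ ENNReal.ofReal ((m n / (m 0 * t ^ n)) ^ 2) * I := by
    rw [hE.iter_norm f u hu n]; exact hint n
  have h7 : ‖u n‖ ^ 2 ≤ (m n / (m 0 * t ^ n)) ^ 2 * I.toReal := by
    have := ENNReal.toReal_mono
      (ENNReal.mul_ne_top ENNReal.ofReal_ne_top hI.ne) h6
    rwa [ENNReal.toReal_ofReal (by positivity),
      ENNReal.toReal_mul, ENNReal.toReal_ofReal (sq_nonneg _)] at this
  have hItr : (0:ℝ) ≤ I.toReal := ENNReal.toReal_nonneg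
  have h8 : ‖u n‖ ≤ (m n / (m 0 * t ^ n)) * Real.sqrt I.toReal := by
    have hK : (0:ℝ) ≤ m n / (m 0 * t ^ n) :=
      div_nonneg (hm n).le (mul_pos hm0 (pow_pos ht n)).le
    have := Real.sqrt_le_sqrt h7
    rwa [Real.sqrt_sq_eq_abs, abs_of_nonneg (norm_nonneg _),
      Real.sqrt_mul (sq_nonneg _), Real.sqrt_sq hK] at this
  have h9 : (m n / (m 0 * t ^ n)) * Real.sqrt I.toReal =
      (Real.sqrt I.toReal / m 0) * (1 / t) ^ n * m n := by
    have h0 : m 0 ≠ 0 := hm0.ne'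
    have htne : t ≠ 0 := ht.ne'
    rw [div_pow]; field_simp; ring
  rw [h9] at h8
  refine h8.trans ?_
  have hpos : (0:ℝ) ≤ (1 / t) ^ n * m n := mul_nonneg (by positivity) (hm n).le
  nlinarith [hpos]
end

section
/- Let $A$ be a self-adjoint operator in a complex Hilbert space with spectral measure $E_A$ and let $\{m_n\}$ satisfy (WGR) with Mandelbrojt function $T$. Then $C_{\{m_n\}}(A) = \bigcup_{t>0} D(T(t|A|))$ and $C_{(m_n)}(A) = \bigcap_{t>0} D(T(t|A|))$. -/
open MeasureTheory

variable {X : Type*} [NormedAddCommGroup X] [InnerProductSpace ℂ X] [CompleteSpace X]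

lemma summable_pow_div_aux (m : ℕ → ℝ) (hm : ∀ n, 0 < m n)
    (hWGR : ∀ β : ℝ, 0 < β → ∃ c : ℝ, 0 < c ∧ ∀ n : ℕ, c * β ^ n ≤ m n)
    (x : ℝ) (hx : 0 ≤ x) : Summable (fun n : ℕ => x ^ n / m n) := by
  obtain ⟨c, hc, hcb⟩ := hWGR (2 * x + 1) (by linarith)
  have hgeom : Summable (fun n : ℕ => c⁻¹ * (x / (2 * x + 1)) ^ n) := by
    refine Summable.mul_left _ (summable_geometric_of_lt_one (div_nonneg hx (by linarith)) ?_)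
    rw [div_lt_one (by linarith)]; linarith
  refine Summable.of_nonneg_of_le (fun n => div_nonneg (pow_nonneg hx n) (hm n).le) (fun n => ?_) hgeom
  have h1 : x ^ n / m n ≤ x ^ n / (c * (2 * x + 1) ^ n) :=
    div_le_div_of_nonneg_left (pow_nonneg hx n) (mul_pos hc (pow_pos (by linarith) n)) (hcb n)
  refine h1.trans_eq ?_
  rw [div_pow]
  field_simp

lemma cs_lemma_aux (a : ℕ → ℝ) (ha : ∀ n, 0 ≤ a n)
    (hb : Summable fun n => 2 ^ n * (a n) ^ 2) :
    (∑' n, a n) ^ 2 ≤ 2 * ∑' n, 2 ^ n * (a n) ^ 2 := by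
  set S := ∑' n, 2 ^ n * (a n) ^ 2 with hS
  have hS0 : 0 ≤ S := tsum_nonneg (fun n => by positivity)
  have key : ∀ s : Finset ℕ, ∑ i ∈ s, a i ≤ Real.sqrt (2 * S) := by
    intro s
    rw [Real.le_sqrt (Finset.sum_nonneg fun i _ => ha i) (by positivity)]
    have h1 : (∑ i ∈ s, a i) ^ 2
        = (∑ i ∈ s, Real.sqrt ((2:ℝ)⁻¹ ^ i) * (Real.sqrt ((2:ℝ) ^ i) * a i)) ^ 2 := by
      congr 1
      refine Finset.sum_congr rfl fun i _ => ?_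
      rw [← mul_assoc, ← Real.sqrt_mul (by positivity), inv_pow, inv_mul_cancel₀ (by positivity),
        Real.sqrt_one, one_mul]
    rw [h1]
    calc (∑ i ∈ s, Real.sqrt ((2:ℝ)⁻¹ ^ i) * (Real.sqrt ((2:ℝ) ^ i) * a i)) ^ 2
        ≤ (∑ i ∈ s, Real.sqrt ((2:ℝ)⁻¹ ^ i) ^ 2) * ∑ i ∈ s, (Real.sqrt ((2:ℝ) ^ i) * a i) ^ 2 :=
          Finset.sum_mul_sq_le_sq_mul_sq s _ _
      _ ≤ 2 * S := by
          have e1 : ∑ i ∈ s, Real.sqrt ((2:ℝ)⁻¹ ^ i) ^ 2 ≤ 2 := by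
            have : ∀ i ∈ s, Real.sqrt ((2:ℝ)⁻¹ ^ i) ^ 2 = (2:ℝ)⁻¹ ^ i := fun i _ =>
              Real.sq_sqrt (by positivity)
            rw [Finset.sum_congr rfl this]
            calc ∑ i ∈ s, (2:ℝ)⁻¹ ^ i ≤ ∑' i : ℕ, (2:ℝ)⁻¹ ^ i :=
                  Summable.sum_le_tsum s (fun i _ => by positivity)
                    (summable_geometric_of_lt_one (by norm_num) (by norm_num))
              _ = 2 := by rw [tsum_geometric_of_lt_one (by norm_num) (by norm_num)]; norm_num
          have e2 : ∑ i ∈ s, (Real.sqrt ((2:ℝ) ^ i) * a i) ^ 2 ≤ S := by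
            have : ∀ i ∈ s, (Real.sqrt ((2:ℝ) ^ i) * a i) ^ 2 = 2 ^ i * (a i) ^ 2 := by
              intro i _
              rw [mul_pow, Real.sq_sqrt (by positivity)]
            rw [Finset.sum_congr rfl this]
            exact Summable.sum_le_tsum s (fun i _ => by positivity) hb
          have h2 : 0 ≤ ∑ i ∈ s, (Real.sqrt ((2:ℝ) ^ i) * a i) ^ 2 :=
            Finset.sum_nonneg fun i _ => by positivity
          nlinarith
  have h3 := tsum_le_of_sum_le' (L := SummationFilter.unconditional ℕ) (Real.sqrt_nonneg (2 * S)) key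
  calc (∑' n, a n) ^ 2 ≤ Real.sqrt (2 * S) ^ 2 :=
        pow_le_pow_left₀ (tsum_nonneg ha) h3 2
    _ = 2 * S := Real.sq_sqrt (by positivity)

variable {X : Type*} [NormedAddCommGroup X] [InnerProductSpace ℂ X] [CompleteSpace X] in
lemma bound_of_memdom (A : X →ₗ.[ℂ] X) (E : Set ℝ → X →L[ℂ] X) (μ : X → Measure ℝ)
    (hE : IsSpectralMeasureOf A E μ) (m : ℕ → ℝ) (hm : ∀ n, 0 < m n)
    (hWGR : ∀ β : ℝ, 0 < β → ∃ c : ℝ, 0 < c ∧ ∀ n : ℕ, c * β ^ n ≤ m n)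
    (T : ℝ → ℝ) (hT : ∀ l : ℝ, T l = m 0 * ∑' n : ℕ, l ^ n / m n)
    (f : X) (t : ℝ) (ht : 0 < t) (hmem : MemDom μ (fun l => T (t * |l|)) f) :
    (∃ u : ℕ → X, IterSeq A f u) ∧ ∃ c : ℝ, 0 < c ∧
      ∀ u : ℕ → X, IterSeq A f u → ∀ n : ℕ, ‖u n‖ ≤ c * (1 / t) ^ n * m n := by
  unfold MemDom at hmem
  set M := ∫⁻ l : ℝ, ENNReal.ofReal ((T (t * |l|)) ^ 2) ∂(μ f) with hM
  -- pointwise lower bound on T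
  have key : ∀ (n : ℕ) (l : ℝ), ENNReal.ofReal (l ^ (2 * n)) ≤
      ENNReal.ofReal ((m n / (m 0 * t ^ n)) ^ 2) * ENNReal.ofReal ((T (t * |l|)) ^ 2) := by
    intro n l
    rw [← ENNReal.ofReal_mul (by positivity)]
    apply ENNReal.ofReal_le_ofReal
    have hx : (0:ℝ) ≤ t * |l| := by positivity
    have hterm : m 0 * (t * |l|) ^ n / m n ≤ T (t * |l|) := by
      rw [hT, mul_div_assoc]
      exact mul_le_mul_of_nonneg_left
        (Summable.le_tsum (summable_pow_div_aux m hm hWGR _ hx) n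
          (fun j _ => div_nonneg (pow_nonneg hx j) (hm j).le)) (hm 0).le
    have hsq : (m 0 * (t * |l|) ^ n / m n) ^ 2 ≤ (T (t * |l|)) ^ 2 :=
      pow_le_pow_left₀ (div_nonneg (mul_nonneg (hm 0).le (pow_nonneg hx n)) (hm n).le) hterm 2
    have hl2 : |l| ^ (2 * n) = l ^ (2 * n) := by
      rw [pow_abs, abs_of_nonneg (Even.pow_nonneg (even_two_mul n) l)]
    have halg : l ^ (2 * n) = (m n / (m 0 * t ^ n)) ^ 2 * (m 0 * (t * |l|) ^ n / m n) ^ 2 := by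
      rw [← hl2]
      have h1 : m n ≠ 0 := (hm n).ne'
      have h2 : m 0 ≠ 0 := (hm 0).ne'
      have h3 : t ≠ 0 := ht.ne'
      field_simp
      ring
    rw [halg]
    exact mul_le_mul_of_nonneg_left hsq (by positivity)
  have In_le : ∀ n : ℕ, (∫⁻ l : ℝ, ENNReal.ofReal (l ^ (2 * n)) ∂(μ f)) ≤
      ENNReal.ofReal ((m n / (m 0 * t ^ n)) ^ 2) * M := by
    intro n
    calc ∫⁻ l : ℝ, ENNReal.ofReal (l ^ (2 * n)) ∂(μ f)
        ≤ ∫⁻ l : ℝ, ENNReal.ofReal ((m n / (m 0 * t ^ n)) ^ 2) *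
            ENNReal.ofReal ((T (t * |l|)) ^ 2) ∂(μ f) := lintegral_mono (key n)
      _ = _ := lintegral_const_mul' _ _ ENNReal.ofReal_ne_top
  have Ifin : ∀ n : ℕ, (∫⁻ l : ℝ, ENNReal.ofReal (l ^ (2 * n)) ∂(μ f)) < ⊤ :=
    fun n => lt_of_le_of_lt (In_le n) (ENNReal.mul_lt_top ENNReal.ofReal_lt_top hmem)
  refine ⟨hE.iter_dom f Ifin, (Real.sqrt M.toReal + 1) / m 0, div_pos (by positivity) (hm 0), ?_⟩
  intro u hu n
  have hnorm := hE.iter_norm f u hu n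
  have hMeq : ENNReal.ofReal M.toReal = M := ENNReal.ofReal_toReal hmem.ne
  have h4 : ENNReal.ofReal (‖u n‖ ^ 2) ≤
      ENNReal.ofReal ((m n / (m 0 * t ^ n)) ^ 2 * M.toReal) := by
    rw [ENNReal.ofReal_mul (by positivity), hMeq, hnorm]
    exact In_le n
  have h5 : ‖u n‖ ^ 2 ≤ (m n / (m 0 * t ^ n)) ^ 2 * M.toReal :=
    (ENNReal.ofReal_le_ofReal_iff (by positivity)).mp h4
  have h6 : ‖u n‖ ≤ Real.sqrt ((m n / (m 0 * t ^ n)) ^ 2 * M.toReal) :=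
    (Real.le_sqrt (norm_nonneg _) (by positivity)).mpr h5
  have h7 : Real.sqrt ((m n / (m 0 * t ^ n)) ^ 2 * M.toReal)
      = m n / (m 0 * t ^ n) * Real.sqrt M.toReal := by
    rw [Real.sqrt_mul (by positivity), Real.sqrt_sq (le_of_lt (div_pos (hm n) (mul_pos (hm 0) (pow_pos ht n))))]
  have h8 : m n / (m 0 * t ^ n) * Real.sqrt M.toReal
      = (Real.sqrt M.toReal / m 0) * (1 / t) ^ n * m n := by
    have h1 : m 0 ≠ 0 := (hm 0).ne'
    have h3 : t ≠ 0 := ht.ne'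
    ring
  rw [h7, h8] at h6
  refine h6.trans ?_
  have hp : (0:ℝ) ≤ (1 / t) ^ n := pow_nonneg (one_div_nonneg.mpr ht.le) n
  refine mul_le_mul_of_nonneg_right (mul_le_mul_of_nonneg_right ?_ hp) (hm n).le
  exact (div_le_div_iff_of_pos_right (hm 0)).mpr (by linarith [Real.sqrt_nonneg M.toReal])

variable {X : Type*} [NormedAddCommGroup X] [InnerProductSpace ℂ X] [CompleteSpace X] in
lemma memdom_of_bound (A : X →ₗ.[ℂ] X) (E : Set ℝ → X →L[ℂ] X) (μ : X → Measure ℝ)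
    (hE : IsSpectralMeasureOf A E μ) (m : ℕ → ℝ) (hm : ∀ n, 0 < m n)
    (hWGR : ∀ β : ℝ, 0 < β → ∃ c : ℝ, 0 < c ∧ ∀ n : ℕ, c * β ^ n ≤ m n)
    (T : ℝ → ℝ) (hT : ∀ l : ℝ, T l = m 0 * ∑' n : ℕ, l ^ n / m n)
    (f : X) (u : ℕ → X) (hu : IterSeq A f u) (α c : ℝ) (hα : 0 < α) (hc : 0 < c)
    (hb : ∀ n : ℕ, ‖u n‖ ≤ c * α ^ n * m n) :
    MemDom μ (fun l => T ((1 / (2 * α)) * |l|)) f := by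
  set t : ℝ := 1 / (2 * α) with htdef
  have ht : 0 < t := by positivity
  unfold MemDom
  have hx : ∀ l : ℝ, (0:ℝ) ≤ t * |l| := fun l => by positivity
  -- weighted square-summability
  have hsum2 : ∀ l : ℝ, Summable (fun k : ℕ => 2 ^ k * ((t * |l|) ^ k / m k) ^ 2) := by
    intro l
    have hs2 : Summable (fun k : ℕ => (Real.sqrt 2 * (t * |l|)) ^ k / m k) :=
      summable_pow_div_aux m hm hWGR _ (by positivity)
    have hnn : ∀ k : ℕ, (0:ℝ) ≤ (Real.sqrt 2 * (t * |l|)) ^ k / m k := fun k =>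
      div_nonneg (pow_nonneg (by positivity) k) (hm k).le
    have hsq : Summable (fun k : ℕ => ((Real.sqrt 2 * (t * |l|)) ^ k / m k) ^ 2) := by
      refine Summable.of_nonneg_of_le (fun k => by positivity) (fun k => ?_)
        (hs2.mul_left (∑' k : ℕ, (Real.sqrt 2 * (t * |l|)) ^ k / m k))
      rw [sq]
      exact mul_le_mul_of_nonneg_right (Summable.le_tsum hs2 k (fun j _ => hnn j)) (hnn k)
    have heq : ∀ k : ℕ, ((Real.sqrt 2 * (t * |l|)) ^ k / m k) ^ 2
        = 2 ^ k * ((t * |l|) ^ k / m k) ^ 2 := by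
      intro k
      have h2 : ((Real.sqrt 2) ^ k) ^ 2 = 2 ^ k := by
        rw [← pow_mul, mul_comm, pow_mul, Real.sq_sqrt (by norm_num)]
      calc ((Real.sqrt 2 * (t * |l|)) ^ k / m k) ^ 2
          = ((Real.sqrt 2) ^ k * ((t * |l|) ^ k / m k)) ^ 2 := by
            rw [mul_pow (Real.sqrt 2), mul_div_assoc]
        _ = ((Real.sqrt 2) ^ k) ^ 2 * ((t * |l|) ^ k / m k) ^ 2 := mul_pow _ _ 2
        _ = 2 ^ k * ((t * |l|) ^ k / m k) ^ 2 := by rw [h2]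
    exact (summable_congr heq).mp hsq
  -- pointwise bound via Cauchy-Schwarz for series
  have key : ∀ l : ℝ, ENNReal.ofReal ((T (t * |l|)) ^ 2) ≤
      ENNReal.ofReal (2 * (m 0) ^ 2) *
        ∑' k : ℕ, ENNReal.ofReal (2 ^ k * ((t * |l|) ^ k / m k) ^ 2) := by
    intro l
    have hcs := cs_lemma_aux (fun k => (t * |l|) ^ k / m k)
      (fun k => div_nonneg (pow_nonneg (hx l) k) (hm k).le) (hsum2 l)
    have h1 : (T (t * |l|)) ^ 2 ≤
        2 * (m 0) ^ 2 * ∑' k : ℕ, 2 ^ k * ((t * |l|) ^ k / m k) ^ 2 := by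
      rw [hT, mul_pow]
      calc (m 0) ^ 2 * (∑' k : ℕ, (t * |l|) ^ k / m k) ^ 2
          ≤ (m 0) ^ 2 * (2 * ∑' k : ℕ, 2 ^ k * ((t * |l|) ^ k / m k) ^ 2) :=
            mul_le_mul_of_nonneg_left hcs (by positivity)
        _ = _ := by ring
    calc ENNReal.ofReal ((T (t * |l|)) ^ 2)
        ≤ ENNReal.ofReal (2 * (m 0) ^ 2 * ∑' k : ℕ, 2 ^ k * ((t * |l|) ^ k / m k) ^ 2) :=
          ENNReal.ofReal_le_ofReal h1
      _ = ENNReal.ofReal (2 * (m 0) ^ 2) *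
            ENNReal.ofReal (∑' k : ℕ, 2 ^ k * ((t * |l|) ^ k / m k) ^ 2) := by
          rw [ENNReal.ofReal_mul (by positivity)]
      _ = _ := by
          rw [ENNReal.ofReal_tsum_of_nonneg (fun k => by positivity) (hsum2 l)]
  -- measurability of the summands
  have hmeas : ∀ k : ℕ, AEMeasurable
      (fun l : ℝ => ENNReal.ofReal (2 ^ k * ((t * |l|) ^ k / m k) ^ 2)) (μ f) := by
    intro k
    have hcont : Continuous fun l : ℝ => 2 ^ k * ((t * |l|) ^ k / m k) ^ 2 := by
      continuity
    exact (hcont.measurable.ennreal_ofReal).aemeasurable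
  -- compare each term integral with the iterate norms
  have hterm : ∀ k : ℕ, (∫⁻ l : ℝ, ENNReal.ofReal (2 ^ k * ((t * |l|) ^ k / m k) ^ 2) ∂(μ f))
      ≤ ENNReal.ofReal (c ^ 2 * (1 / 2 : ℝ) ^ k) := by
    intro k
    have halg : ∀ l : ℝ, 2 ^ k * ((t * |l|) ^ k / m k) ^ 2
        = (2 ^ k * t ^ (2 * k) / (m k) ^ 2) * l ^ (2 * k) := by
      intro l
      have hl2 : |l| ^ (2 * k) = l ^ (2 * k) := by
        rw [pow_abs, abs_of_nonneg (Even.pow_nonneg (even_two_mul k) l)]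
      have hk : m k ≠ 0 := (hm k).ne'
      rw [← hl2]
      field_simp
      ring
    have hCnn : (0:ℝ) ≤ 2 ^ k * t ^ (2 * k) / (m k) ^ 2 := by positivity
    calc (∫⁻ l : ℝ, ENNReal.ofReal (2 ^ k * ((t * |l|) ^ k / m k) ^ 2) ∂(μ f))
        = ∫⁻ l : ℝ, ENNReal.ofReal (2 ^ k * t ^ (2 * k) / (m k) ^ 2) *
            ENNReal.ofReal (l ^ (2 * k)) ∂(μ f) := by
          refine lintegral_congr fun l => ?_
          rw [← ENNReal.ofReal_mul hCnn, ← halg l]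
      _ = ENNReal.ofReal (2 ^ k * t ^ (2 * k) / (m k) ^ 2) *
            ∫⁻ l : ℝ, ENNReal.ofReal (l ^ (2 * k)) ∂(μ f) :=
          lintegral_const_mul' _ _ ENNReal.ofReal_ne_top
      _ = ENNReal.ofReal (2 ^ k * t ^ (2 * k) / (m k) ^ 2) *
            ENNReal.ofReal (‖u k‖ ^ 2) := by rw [hE.iter_norm f u hu k]
      _ ≤ ENNReal.ofReal (2 ^ k * t ^ (2 * k) / (m k) ^ 2) *
            ENNReal.ofReal ((c * α ^ k * m k) ^ 2) := by
          refine mul_le_mul_right (ENNReal.ofReal_le_ofReal ?_) _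
          exact pow_le_pow_left₀ (norm_nonneg _) (hb k) 2
      _ = ENNReal.ofReal (c ^ 2 * (1 / 2 : ℝ) ^ k) := by
          rw [← ENNReal.ofReal_mul hCnn]
          congr 1
          have hαt : t * α = 1 / 2 := by rw [htdef]; field_simp
          have hk : m k ≠ 0 := (hm k).ne'
          have hgen : ∀ s : ℝ, s * α = 1 / 2 →
              2 ^ k * s ^ (2 * k) / (m k) ^ 2 * (c * α ^ k * m k) ^ 2
                = c ^ 2 * (1 / 2 : ℝ) ^ k := by
            intro s hs
            have h14 : s ^ (2 * k) * α ^ (2 * k) = (4:ℝ)⁻¹ ^ k := by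
              rw [← mul_pow, hs, pow_mul]; norm_num
            calc 2 ^ k * s ^ (2 * k) / (m k) ^ 2 * (c * α ^ k * m k) ^ 2
                = c ^ 2 * (2 ^ k * (s ^ (2 * k) * α ^ (2 * k))) := by field_simp; ring
              _ = c ^ 2 * (2 ^ k * (4:ℝ)⁻¹ ^ k) := by rw [h14]
              _ = c ^ 2 * (1 / 2 : ℝ) ^ k := by rw [← mul_pow]; norm_num
          exact hgen t hαt
  -- put everything together
  calc (∫⁻ l : ℝ, ENNReal.ofReal ((T (t * |l|)) ^ 2) ∂(μ f))
      ≤ ∫⁻ l : ℝ, ENNReal.ofReal (2 * (m 0) ^ 2) *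
          ∑' k : ℕ, ENNReal.ofReal (2 ^ k * ((t * |l|) ^ k / m k) ^ 2) ∂(μ f) :=
        lintegral_mono key
    _ = ENNReal.ofReal (2 * (m 0) ^ 2) *
          ∫⁻ l : ℝ, ∑' k : ℕ, ENNReal.ofReal (2 ^ k * ((t * |l|) ^ k / m k) ^ 2) ∂(μ f) :=
        lintegral_const_mul' _ _ ENNReal.ofReal_ne_top
    _ = ENNReal.ofReal (2 * (m 0) ^ 2) *
          ∑' k : ℕ, ∫⁻ l : ℝ, ENNReal.ofReal (2 ^ k * ((t * |l|) ^ k / m k) ^ 2) ∂(μ f) := by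
        rw [lintegral_tsum hmeas]
    _ ≤ ENNReal.ofReal (2 * (m 0) ^ 2) *
          ∑' k : ℕ, ENNReal.ofReal (c ^ 2 * (1 / 2 : ℝ) ^ k) :=
        mul_le_mul_right (ENNReal.tsum_le_tsum hterm) _
    _ < ⊤ := by
        refine ENNReal.mul_lt_top ENNReal.ofReal_lt_top ?_
        rw [← ENNReal.ofReal_tsum_of_nonneg (fun k => by positivity)
          ((summable_geometric_of_lt_one (by norm_num) (by norm_num)).mul_left (c ^ 2))]
        exact ENNReal.ofReal_lt_top

/-- For a self-adjoint `A` and `{m n}` satisfying (WGR) with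
Mandelbrojt function `T`: `C_{m_n}(A) = ⋃_{t>0} D(T(t|A|))` and
`C_(m_n)(A) = ⋂_{t>0} D(T(t|A|))`. -/
theorem carleman_classes_eq_dom_T (A : X →ₗ.[ℂ] X) (hsa : IsSelfAdjoint A)
    (E : Set ℝ → X →L[ℂ] X) (μ : X → Measure ℝ) (hE : IsSpectralMeasureOf A E μ)
    (m : ℕ → ℝ) (hm : ∀ n, 0 < m n)
    (hWGR : ∀ β : ℝ, 0 < β → ∃ c : ℝ, 0 < c ∧ ∀ n : ℕ, c * β ^ n ≤ m n)
    (T : ℝ → ℝ) (hT : ∀ l : ℝ, T l = m 0 * ∑' n : ℕ, l ^ n / m n) :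
    {f : X | ∃ u : ℕ → X, IterSeq A f u ∧
        ∃ α : ℝ, 0 < α ∧ ∃ c : ℝ, 0 < c ∧ ∀ n : ℕ, ‖u n‖ ≤ c * α ^ n * m n} =
      {f : X | ∃ t : ℝ, 0 < t ∧ MemDom μ (fun l => T (t * |l|)) f} ∧
    {f : X | ∃ u : ℕ → X, IterSeq A f u ∧
        ∀ α : ℝ, 0 < α → ∃ c : ℝ, 0 < c ∧ ∀ n : ℕ, ‖u n‖ ≤ c * α ^ n * m n} =
      {f : X | ∀ t : ℝ, 0 < t → MemDom μ (fun l => T (t * |l|)) f} := by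
  constructor
  · ext f
    simp only [Set.mem_setOf_eq]
    constructor
    · rintro ⟨u, hu, α, hα, c, hc, hb⟩
      exact ⟨1 / (2 * α), by positivity,
        memdom_of_bound A E μ hE m hm hWGR T hT f u hu α c hα hc hb⟩
    · rintro ⟨t, ht, hmem⟩
      obtain ⟨⟨u, hu⟩, c, hc, hbd⟩ := bound_of_memdom A E μ hE m hm hWGR T hT f t ht hmem
      exact ⟨u, hu, 1 / t, by positivity, c, hc, hbd u hu⟩
  · ext f
    simp only [Set.mem_setOf_eq]
    constructor
    · rintro ⟨u, hu, hall⟩ t ht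
      obtain ⟨c, hc, hb⟩ := hall (1 / (2 * t)) (by positivity)
      have hmd := memdom_of_bound A E μ hE m hm hWGR T hT f u hu (1 / (2 * t)) c
        (by positivity) hc hb
      have he : 1 / (2 * (1 / (2 * t))) = t := by field_simp
      rwa [he] at hmd
    · intro hall
      obtain ⟨⟨u, hu⟩, -⟩ := bound_of_memdom A E μ hE m hm hWGR T hT f 1 one_pos
        (hall 1 one_pos)
      refine ⟨u, hu, fun α hα => ?_⟩
      obtain ⟨-, c, hc, hbd⟩ := bound_of_memdom A E μ hE m hm hWGR T hT f (1 / α)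
        (by positivity) (hall (1 / α) (by positivity))
      have he : 1 / (1 / α) = α := one_div_one_div α
      exact ⟨c, hc, fun n => by rw [← he]; exact hbd u hu n⟩
end

section
/- Let $A$ be a self-adjoint operator in a complex Hilbert space and $\beta>0$. Then the Gevrey class of order $\beta$ satisfies $\mathcal{E}^{\{\beta\}}(A) = \bigcup_{t>0} D(e^{t|A|^{1/\beta}})$ and $\mathcal{E}^{(\beta)}(A) = \bigcap_{t>0} D(e^{t|A|^{1/\beta}})$, where the operators $e^{t|A|^{1/\beta}}$ are defined by the Borel functional calculus. -/
open MeasureTheory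

variable {X : Type*} [NormedAddCommGroup X] [InnerProductSpace ℂ X] [CompleteSpace X]

section Aux
open Real
open scoped ENNReal

-- x^a ≤ (a/(e s))^a * exp (s x)
lemma aux_rpow_le_exp {a s x : ℝ} (ha : 0 < a) (hs : 0 < s) (hx : 0 ≤ x) :
    x ^ a ≤ (a / (Real.exp 1 * s)) ^ a * Real.exp (s * x) := by
  rcases eq_or_lt_of_le hx with h | hx'
  · rw [← h, Real.zero_rpow ha.ne']
    positivity
  · have hb : 0 < a / (Real.exp 1 * s) := by positivity
    rw [Real.rpow_def_of_pos hx', Real.rpow_def_of_pos hb, ← Real.exp_add, Real.exp_le_exp]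
    have hy : 0 < s * x / a := by positivity
    have hlog := Real.log_le_sub_one_of_pos hy
    have hls : Real.log (s * x / a) = Real.log s + Real.log x - Real.log a := by
      rw [Real.log_div (by positivity) ha.ne', Real.log_mul hs.ne' hx'.ne']
    have hla : Real.log (a / (Real.exp 1 * s)) = Real.log a - 1 - Real.log s := by
      rw [Real.log_div ha.ne' (by positivity), Real.log_mul (Real.exp_pos 1).ne' hs.ne',
        Real.log_exp]
      ring
    have h2 : a * (s * x / a - 1) = s * x - a := by field_simp
    rw [hla]
    nlinarith [mul_le_mul_of_nonneg_left hlog ha.le]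

-- (n/e)^n ≤ n!
lemma aux_fact_lower (n : ℕ) : ((n : ℝ) / Real.exp 1) ^ n ≤ (n.factorial : ℝ) := by
  have h1 : ((n : ℝ)) ^ n / (n.factorial : ℝ) ≤ Real.exp n := by
    calc ((n : ℝ)) ^ n / (n.factorial : ℝ)
        ≤ ∑ i ∈ Finset.range (n + 1), (n : ℝ) ^ i / (i.factorial : ℝ) := by
          refine Finset.single_le_sum (f := fun i => (n : ℝ) ^ i / (i.factorial : ℝ)) ?_ ?_
          · intro i _; positivity
          · exact Finset.self_mem_range_succ n
      _ ≤ Real.exp n := Real.sum_le_exp_of_nonneg (by positivity) _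
  have he : Real.exp (n : ℝ) = Real.exp 1 ^ n := (Real.exp_one_pow n).symm
  have hfac : (0 : ℝ) < (n.factorial : ℝ) := by exact_mod_cast n.factorial_pos
  rw [div_pow]
  rw [div_le_iff₀ (by positivity)] at h1 ⊢
  calc ((n : ℝ)) ^ n ≤ Real.exp (n:ℝ) * (n.factorial : ℝ) := h1
    _ = (n.factorial : ℝ) * Real.exp 1 ^ n := by rw [he]; ring


-- |l|^(1/β) raised to 2nβ equals l^(2n)
lemma aux_abs_rpow {β : ℝ} (hβ : 0 < β) (l : ℝ) (n : ℕ) :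
    (|l| ^ (1 / β)) ^ ((n : ℝ) * (2 * β)) = l ^ (2 * n) := by
  have h0 : l ^ (2 * n) = |l| ^ (2 * n) := by
    rw [pow_abs, abs_of_nonneg]
    rw [pow_mul]; positivity
  rw [h0, ← Real.rpow_mul (abs_nonneg l)]
  have h1 : 1 / β * ((n : ℝ) * (2 * β)) = ((2 * n : ℕ) : ℝ) := by
    push_cast; field_simp
  rw [h1, Real.rpow_natCast]

-- L2: pointwise bound for moments by the exponential
lemma pointwise_mom {β t : ℝ} (hβ : 0 < β) (ht : 0 < t) (l : ℝ) {n : ℕ} (hn : n ≠ 0) :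
    l ^ (2 * n) ≤ ((((n : ℝ) / Real.exp 1) * (β / t)) ^ n) ^ (2 * β) *
      (Real.exp (t * |l| ^ (1 / β))) ^ 2 := by
  have hx : (0 : ℝ) ≤ |l| ^ (1 / β) := Real.rpow_nonneg (abs_nonneg l) _
  have ha : (0 : ℝ) < (n : ℝ) * (2 * β) := by
    have : (0:ℝ) < (n:ℝ) := by exact_mod_cast Nat.pos_of_ne_zero hn
    positivity
  have key := aux_rpow_le_exp (a := (n : ℝ) * (2 * β)) (s := 2 * t)
    (x := |l| ^ (1 / β)) ha (by positivity) hx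
  rw [aux_abs_rpow hβ l n] at key
  have hbase : (n : ℝ) * (2 * β) / (Real.exp 1 * (2 * t)) = ((n : ℝ) / Real.exp 1) * (β / t) := by
    field_simp
  rw [hbase] at key
  have hexp : Real.exp (2 * t * (|l| ^ (1 / β))) = (Real.exp (t * |l| ^ (1 / β))) ^ 2 := by
    rw [sq, ← Real.exp_add]; ring_nf
  rw [hexp] at key
  have hb : (0 : ℝ) ≤ ((n : ℝ) / Real.exp 1) * (β / t) := by positivity
  rwa [Real.rpow_natCast_mul hb] at key

-- D bound : the constant is at most (α^n n!^β)^2 with α = (β/t)^β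
lemma aux_Dbound {β t : ℝ} (hβ : 0 < β) (ht : 0 < t) (n : ℕ) :
    ((((n : ℝ) / Real.exp 1) * (β / t)) ^ n) ^ (2 * β) ≤
      (((β / t) ^ β) ^ n * ((n.factorial : ℝ)) ^ β) ^ 2 := by
  have h1 : (0:ℝ) ≤ (n : ℝ) / Real.exp 1 := by positivity
  have h2 : (0:ℝ) ≤ β / t := by positivity
  rw [mul_pow, Real.mul_rpow (by positivity) (by positivity)]
  have hA : (((n : ℝ) / Real.exp 1) ^ n) ^ (2 * β) ≤ ((n.factorial : ℝ) ^ β) ^ 2 := by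
    have : (((n : ℝ) / Real.exp 1) ^ n) ^ (2 * β) ≤ ((n.factorial : ℝ)) ^ (2 * β) :=
      Real.rpow_le_rpow (by positivity) (aux_fact_lower n) (by positivity)
    calc (((n : ℝ) / Real.exp 1) ^ n) ^ (2 * β) ≤ ((n.factorial : ℝ)) ^ (2 * β) := this
      _ = ((n.factorial : ℝ) ^ β) ^ 2 := by
          rw [← Real.rpow_mul_natCast (by positivity : (0:ℝ) ≤ (n.factorial : ℝ))]
          norm_num [mul_comm]
  have hB : (((β / t)) ^ n) ^ (2 * β) = ((((β / t) ^ β) ^ n)) ^ 2 := by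
    rw [← Real.rpow_natCast_mul h2, ← Real.rpow_mul_natCast h2, ← Real.rpow_mul_natCast h2]
    push_cast; ring_nf
  rw [hB, mul_pow]
  have hnn : (0:ℝ) ≤ (((n : ℝ) / Real.exp 1) ^ n) ^ (2*β) := Real.rpow_nonneg (by positivity) _
  have := mul_le_mul_of_nonneg_left hA (le_of_lt (by positivity : (0:ℝ) < ((((β/t)^β)^n))^2))
  linarith [this]


lemma pointwise_exp {β s : ℝ} (hβ : 0 < β) (hs : 0 < s) (l : ℝ) :
    ∃ n : ℕ, (Real.exp ((β / Real.exp 1 * s ^ (1 / (2 * β))) * |l| ^ (1 / β))) ^ 2 ≤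
      Real.exp (2 * β) * (s ^ n / (((n.factorial : ℝ)) ^ β) ^ 2 * l ^ (2 * n)) := by
  have h2β : (2 * β) ≠ 0 := by positivity
  set z : ℝ := (s * l ^ 2) ^ (1 / (2 * β)) with hzdef
  have hz0 : 0 ≤ z := Real.rpow_nonneg (by positivity) _
  have hid : s ^ (1 / (2 * β)) * |l| ^ (1 / β) = z := by
    rw [hzdef, Real.mul_rpow hs.le (sq_nonneg l)]
    congr 1
    rw [← sq_abs, ← Real.rpow_natCast |l| 2, ← Real.rpow_mul (abs_nonneg l)]
    congr 1
    push_cast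
    field_simp
  have hzz : s * l ^ 2 = z ^ (2 * β) := by
    rw [hzdef, one_div, Real.rpow_inv_rpow (by positivity) h2β]
  set n : ℕ := ⌊z / Real.exp 1⌋₊ with hndef
  refine ⟨n, ?_⟩
  have hLHS : (Real.exp ((β / Real.exp 1 * s ^ (1 / (2 * β))) * |l| ^ (1 / β))) ^ 2
      = Real.exp ((2 * β / Real.exp 1) * z) := by
    rw [sq, ← Real.exp_add, mul_assoc, hid]
    congr 1
    ring
  rw [hLHS]
  -- first: exp((2β/e) z) ≤ exp(2β) * exp(2β n)
  have hfloor : z / Real.exp 1 < (n : ℝ) + 1 := Nat.lt_floor_add_one _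
  have hzlt : z < Real.exp 1 * ((n : ℝ) + 1) := by
    rw [div_lt_iff₀ (Real.exp_pos 1)] at hfloor
    linarith [hfloor]
  have h1 : (2 * β / Real.exp 1) * z ≤ 2 * β + 2 * β * n := by
    have he : (0:ℝ) < Real.exp 1 := Real.exp_pos 1
    rw [div_mul_eq_mul_div, div_le_iff₀ he]
    nlinarith [hzlt, hβ]
  have hstep1 : Real.exp ((2 * β / Real.exp 1) * z)
      ≤ Real.exp (2 * β) * Real.exp (2 * β * n) := by
    rw [← Real.exp_add]
    exact Real.exp_le_exp.mpr h1
  refine hstep1.trans ?_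
  refine mul_le_mul_of_nonneg_left ?_ (Real.exp_pos _).le
  -- second: exp(2β n) ≤ s^n / ((n!)^β)^2 * l^(2n)
  have hzn : (z ^ (2 * β)) ^ n = (z ^ n) ^ (2 * β) := by
    rw [← Real.rpow_mul_natCast hz0, mul_comm, Real.rpow_natCast_mul hz0]
  have hT : s ^ n / (((n.factorial : ℝ)) ^ β) ^ 2 * l ^ (2 * n)
      = (z ^ n) ^ (2 * β) / (((n.factorial : ℝ)) ^ β) ^ 2 := by
    rw [pow_mul, div_mul_eq_mul_div, ← mul_pow, hzz, hzn]
  rw [hT, le_div_iff₀ (by positivity)]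
  -- ((n!)^β)^2 = (n!)^(2β)
  have hfpos : (0:ℝ) < (n.factorial : ℝ) := by exact_mod_cast n.factorial_pos
  have hfa : (((n.factorial : ℝ)) ^ β) ^ 2 = ((n.factorial : ℝ)) ^ (2 * β) := by
    rw [← Real.rpow_mul_natCast hfpos.le]
    norm_num
    congr 1
    ring
  have hexpn : Real.exp (2 * β * n) = (Real.exp (n : ℝ)) ^ (2 * β) := by
    rw [← Real.exp_mul]
    congr 1
    ring
  rw [hfa, hexpn]
  have hcomb : ((n.factorial : ℝ)) ^ (2*β) * (Real.exp (n:ℝ)) ^ (2*β)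
      ≤ ((n:ℝ) ^ n) ^ (2*β) * (Real.exp (n:ℝ)) ^ (2*β) := by
    refine mul_le_mul_of_nonneg_right ?_ (Real.rpow_nonneg (Real.exp_pos _).le _)
    refine Real.rpow_le_rpow hfpos.le ?_ (by positivity)
    exact_mod_cast n.factorial_le_pow
  calc (Real.exp (n:ℝ)) ^ (2*β) * ((n.factorial : ℝ)) ^ (2*β)
      = ((n.factorial : ℝ)) ^ (2*β) * (Real.exp (n:ℝ)) ^ (2*β) := mul_comm _ _
    _ ≤ ((n:ℝ) ^ n) ^ (2*β) * (Real.exp (n:ℝ)) ^ (2*β) := hcomb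
    _ = (((n:ℝ) * Real.exp 1) ^ n) ^ (2*β) := by
        rw [← Real.mul_rpow (by positivity) (Real.exp_pos _).le, mul_pow,
          Real.exp_one_pow]
    _ ≤ (z ^ n) ^ (2*β) := by
        refine Real.rpow_le_rpow (by positivity) ?_ (by positivity)
        refine pow_le_pow_left₀ (by positivity) ?_ n
        have := Nat.floor_le (by positivity : (0:ℝ) ≤ z / Real.exp 1)
        rw [le_div_iff₀ (Real.exp_pos 1)] at this
        linarith [this]

lemma momentBound {ν : Measure ℝ} {β t w : ℝ} (hβ : 0 < β) (ht : 0 < t) (hw : 0 ≤ w)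
    (hν : ν Set.univ ≤ ENNReal.ofReal (w ^ 2))
    (hI : (∫⁻ l : ℝ, ENNReal.ofReal ((Real.exp (t * |l| ^ (1 / β))) ^ 2) ∂ν) < ⊤) :
    ∃ C : ℝ, w < C ∧ ∀ n : ℕ,
      (∫⁻ l : ℝ, ENNReal.ofReal (l ^ (2 * n)) ∂ν) ≤
        ENNReal.ofReal ((C * ((β / t) ^ β) ^ n * ((n.factorial : ℝ)) ^ β) ^ 2) := by
  set I : ℝ≥0∞ := ∫⁻ l : ℝ, ENNReal.ofReal ((Real.exp (t * |l| ^ (1 / β))) ^ 2) ∂ν with hIdef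
  set C : ℝ := max (Real.sqrt I.toReal) w + 1 with hC
  have hwC : w < C := by
    have : w ≤ max (Real.sqrt I.toReal) w := le_max_right _ _
    linarith
  have hC0 : 0 < C := lt_of_le_of_lt hw hwC
  have hIC : I.toReal ≤ C ^ 2 := by
    have h1 : Real.sqrt I.toReal ≤ C := by
      have := le_max_left (Real.sqrt I.toReal) w; linarith
    have h2 : (Real.sqrt I.toReal) ^ 2 = I.toReal := Real.sq_sqrt ENNReal.toReal_nonneg
    nlinarith [Real.sqrt_nonneg I.toReal]
  refine ⟨C, hwC, fun n => ?_⟩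
  rcases eq_or_ne n 0 with rfl | hn
  · simp only [Nat.mul_zero, pow_zero, Nat.factorial_zero, Nat.cast_one, Real.one_rpow, mul_one]
    calc (∫⁻ _ : ℝ, ENNReal.ofReal (1:ℝ) ∂ν) = ν Set.univ := by simp
      _ ≤ ENNReal.ofReal (w ^ 2) := hν
      _ ≤ ENNReal.ofReal (C ^ 2) := by
          apply ENNReal.ofReal_le_ofReal; nlinarith
  · -- n ≥ 1
    set D : ℝ := ((((n : ℝ) / Real.exp 1) * (β / t)) ^ n) ^ (2 * β) with hD
    have hD0 : 0 ≤ D := Real.rpow_nonneg (by positivity) _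
    have step1 : (∫⁻ l : ℝ, ENNReal.ofReal (l ^ (2 * n)) ∂ν) ≤ ENNReal.ofReal D * I := by
      rw [hIdef, ← lintegral_const_mul' _ _ ENNReal.ofReal_ne_top]
      refine lintegral_mono fun l => ?_
      rw [← ENNReal.ofReal_mul hD0]
      exact ENNReal.ofReal_le_ofReal (pointwise_mom hβ ht l hn)
    have step2 : ENNReal.ofReal D * I ≤ ENNReal.ofReal (D * I.toReal) := by
      rw [ENNReal.ofReal_mul hD0]
      exact mul_le_mul_right (le_of_eq (ENNReal.ofReal_toReal hI.ne).symm) _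
    refine (step1.trans step2).trans (ENNReal.ofReal_le_ofReal ?_)
    have h3 : D ≤ (((β / t) ^ β) ^ n * ((n.factorial : ℝ)) ^ β) ^ 2 := aux_Dbound hβ ht n
    have h4 : (C * ((β / t) ^ β) ^ n * ((n.factorial : ℝ)) ^ β) ^ 2
        = (((β / t) ^ β) ^ n * ((n.factorial : ℝ)) ^ β) ^ 2 * C ^ 2 := by ring
    rw [h4]
    have hq : (0:ℝ) ≤ (((β / t) ^ β) ^ n * ((n.factorial : ℝ)) ^ β) ^ 2 := by positivity
    exact mul_le_mul h3 hIC ENNReal.toReal_nonneg hq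

lemma expIntegrable {ν : Measure ℝ} {β s c α : ℝ} (hβ : 0 < β) (hs : 0 < s)
    (hα : 0 < α) (hsα : s * α ^ 2 ≤ 1 / 2)
    (hM : ∀ n : ℕ, (∫⁻ l : ℝ, ENNReal.ofReal (l ^ (2 * n)) ∂ν) ≤
      ENNReal.ofReal ((c * α ^ n * ((n.factorial : ℝ)) ^ β) ^ 2)) :
    (∫⁻ l : ℝ, ENNReal.ofReal
      ((Real.exp ((β / Real.exp 1 * s ^ (1 / (2 * β))) * |l| ^ (1 / β))) ^ 2) ∂ν) < ⊤ := by
  set K : ℕ → ℝ := fun n => Real.exp (2 * β) * (s ^ n / (((n.factorial : ℝ)) ^ β) ^ 2) with hK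
  have hK0 : ∀ n, 0 ≤ K n := by
    intro n
    have : (0:ℝ) < ((n.factorial : ℝ)) ^ β := Real.rpow_pos_of_pos (by exact_mod_cast n.factorial_pos) _
    positivity
  have step1 : (∫⁻ l : ℝ, ENNReal.ofReal
      ((Real.exp ((β / Real.exp 1 * s ^ (1 / (2 * β))) * |l| ^ (1 / β))) ^ 2) ∂ν)
      ≤ ∑' n : ℕ, ∫⁻ l : ℝ, ENNReal.ofReal (K n * l ^ (2 * n)) ∂ν := by
    rw [← lintegral_tsum ?hmeas]
    case hmeas =>
      intro n
      exact (Measurable.ennreal_ofReal (by fun_prop)).aemeasurable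
    refine lintegral_mono fun l => ?_
    obtain ⟨n, hn⟩ := pointwise_exp hβ hs l
    refine le_trans (ENNReal.ofReal_le_ofReal ?_) (ENNReal.le_tsum n)
    rw [hK]
    calc (Real.exp ((β / Real.exp 1 * s ^ (1 / (2 * β))) * |l| ^ (1 / β))) ^ 2
        ≤ Real.exp (2 * β) * (s ^ n / (((n.factorial : ℝ)) ^ β) ^ 2 * l ^ (2 * n)) := hn
      _ = Real.exp (2 * β) * (s ^ n / (((n.factorial : ℝ)) ^ β) ^ 2) * l ^ (2 * n) := by ring
  have step2 : ∀ n : ℕ, (∫⁻ l : ℝ, ENNReal.ofReal (K n * l ^ (2 * n)) ∂ν)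
      ≤ ENNReal.ofReal ((Real.exp (2 * β) * c ^ 2) * (1 / 2) ^ n) := by
    intro n
    have heq : (∫⁻ l : ℝ, ENNReal.ofReal (K n * l ^ (2 * n)) ∂ν)
        = ENNReal.ofReal (K n) * ∫⁻ l : ℝ, ENNReal.ofReal (l ^ (2 * n)) ∂ν := by
      rw [← lintegral_const_mul' _ _ ENNReal.ofReal_ne_top]
      congr 1 with l
      rw [← ENNReal.ofReal_mul (hK0 n)]
    rw [heq]
    calc ENNReal.ofReal (K n) * ∫⁻ l : ℝ, ENNReal.ofReal (l ^ (2 * n)) ∂ν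
        ≤ ENNReal.ofReal (K n) * ENNReal.ofReal ((c * α ^ n * ((n.factorial : ℝ)) ^ β) ^ 2) :=
          mul_le_mul_right (hM n) _
      _ = ENNReal.ofReal (K n * (c * α ^ n * ((n.factorial : ℝ)) ^ β) ^ 2) := by
          rw [← ENNReal.ofReal_mul (hK0 n)]
      _ ≤ ENNReal.ofReal ((Real.exp (2 * β) * c ^ 2) * (1 / 2) ^ n) := by
          apply ENNReal.ofReal_le_ofReal
          have hf : (0:ℝ) < ((n.factorial : ℝ)) ^ β :=
            Real.rpow_pos_of_pos (by exact_mod_cast n.factorial_pos) _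
          have hKeq : K n * (c * α ^ n * ((n.factorial : ℝ)) ^ β) ^ 2
              = Real.exp (2 * β) * c ^ 2 * (s * α ^ 2) ^ n := by
            rw [hK]
            field_simp
            ring
          rw [hKeq]
          refine mul_le_mul_of_nonneg_left ?_ (by positivity)
          exact pow_le_pow_left₀ (by positivity) hsα n
  have step3 : (∑' n : ℕ, ENNReal.ofReal ((Real.exp (2 * β) * c ^ 2) * (1 / 2) ^ n)) < ⊤ := by
    have heq : ∀ n : ℕ, ENNReal.ofReal ((Real.exp (2 * β) * c ^ 2) * (1 / 2) ^ n)
        = ENNReal.ofReal (Real.exp (2 * β) * c ^ 2) * (ENNReal.ofReal (1 / 2)) ^ n := by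
      intro n
      rw [ENNReal.ofReal_mul (by positivity), ENNReal.ofReal_pow (by norm_num)]
    simp_rw [heq]
    rw [ENNReal.tsum_mul_left, ENNReal.tsum_geometric]
    refine ENNReal.mul_lt_top ENNReal.ofReal_lt_top ?_
    refine ENNReal.inv_lt_top.mpr ?_
    refine tsub_pos_of_lt ?_
    exact ENNReal.ofReal_lt_one.mpr (by norm_num)
  calc (∫⁻ l : ℝ, ENNReal.ofReal
      ((Real.exp ((β / Real.exp 1 * s ^ (1 / (2 * β))) * |l| ^ (1 / β))) ^ 2) ∂ν)
      ≤ ∑' n : ℕ, ∫⁻ l : ℝ, ENNReal.ofReal (K n * l ^ (2 * n)) ∂ν := step1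
    _ ≤ ∑' n : ℕ, ENNReal.ofReal ((Real.exp (2 * β) * c ^ 2) * (1 / 2) ^ n) :=
        ENNReal.tsum_le_tsum step2
    _ < ⊤ := step3

end Aux
/-- For a self-adjoint `A` and `β > 0`, the Gevrey classes of order
`β` satisfy `𝓔^{β}(A) = ⋃_{t>0} D(exp(t|A|^(1/β)))` and
`𝓔^(β)(A) = ⋂_{t>0} D(exp(t|A|^(1/β)))`. -/
theorem gevrey_classes_eq_dom_exp (A : X →ₗ.[ℂ] X) (hsa : IsSelfAdjoint A)
    (E : Set ℝ → X →L[ℂ] X) (μ : X → Measure ℝ) (hE : IsSpectralMeasureOf A E μ)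
    (β : ℝ) (hβ : 0 < β) :
    {f : X | ∃ u : ℕ → X, IterSeq A f u ∧ ∃ α : ℝ, 0 < α ∧ ∃ c : ℝ, 0 < c ∧
        ∀ n : ℕ, ‖u n‖ ≤ c * α ^ n * (Nat.factorial n : ℝ) ^ β} =
      {f : X | ∃ t : ℝ, 0 < t ∧
        MemDom μ (fun l => Real.exp (t * |l| ^ (1 / β))) f} ∧
    {f : X | ∃ u : ℕ → X, IterSeq A f u ∧ ∀ α : ℝ, 0 < α → ∃ c : ℝ, 0 < c ∧
        ∀ n : ℕ, ‖u n‖ ≤ c * α ^ n * (Nat.factorial n : ℝ) ^ β} =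
      {f : X | ∀ t : ℝ, 0 < t →
        MemDom μ (fun l => Real.exp (t * |l| ^ (1 / β))) f} := by
  have hmom_of_bound : ∀ (f : X) (u : ℕ → X), IterSeq A f u → ∀ (c α : ℝ),
      (∀ n : ℕ, ‖u n‖ ≤ c * α ^ n * (Nat.factorial n : ℝ) ^ β) →
      ∀ n : ℕ, (∫⁻ l : ℝ, ENNReal.ofReal (l ^ (2 * n)) ∂(μ f)) ≤
        ENNReal.ofReal ((c * α ^ n * ((Nat.factorial n : ℝ)) ^ β) ^ 2) := by
    intro f u hu c α hb n
    rw [← hE.iter_norm f u hu n]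
    apply ENNReal.ofReal_le_ofReal
    exact pow_le_pow_left₀ (norm_nonneg _) (hb n) 2
  have hback : ∀ (f : X) (t : ℝ), 0 < t →
      MemDom μ (fun l => Real.exp (t * |l| ^ (1 / β))) f →
      ∃ C : ℝ, 0 < C ∧ ∀ n : ℕ,
        (∫⁻ l : ℝ, ENNReal.ofReal (l ^ (2 * n)) ∂(μ f)) ≤
          ENNReal.ofReal ((C * ((β / t) ^ β) ^ n * ((Nat.factorial n : ℝ)) ^ β) ^ 2) := by
    intro f t ht hmem
    have hν : (μ f) Set.univ ≤ ENNReal.ofReal (‖f‖ ^ 2) := le_of_eq (hE.mu_univ f)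
    obtain ⟨C, hwC, hMom⟩ := momentBound hβ ht (norm_nonneg f) hν hmem
    exact ⟨C, lt_of_le_of_lt (norm_nonneg f) hwC, hMom⟩
  have hseq_of : ∀ (f : X) (t : ℝ), 0 < t → (∃ C : ℝ, 0 < C ∧ ∀ n : ℕ,
      (∫⁻ l : ℝ, ENNReal.ofReal (l ^ (2 * n)) ∂(μ f)) ≤
        ENNReal.ofReal ((C * ((β / t) ^ β) ^ n * ((Nat.factorial n : ℝ)) ^ β) ^ 2)) →
      ∀ u : ℕ → X, IterSeq A f u →
      ∃ C : ℝ, 0 < C ∧ ∀ n : ℕ, ‖u n‖ ≤ C * ((β / t) ^ β) ^ n * (Nat.factorial n : ℝ) ^ β := by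
    intro f t ht ⟨C, hC0, hMom⟩ u hu
    refine ⟨C, hC0, fun n => ?_⟩
    have h1 : ENNReal.ofReal (‖u n‖ ^ 2) ≤
        ENNReal.ofReal ((C * ((β / t) ^ β) ^ n * ((Nat.factorial n : ℝ)) ^ β) ^ 2) := by
      rw [hE.iter_norm f u hu n]; exact hMom n
    have hRnn : (0:ℝ) ≤ C * ((β / t) ^ β) ^ n * ((Nat.factorial n : ℝ)) ^ β := by
      have h2 : (0:ℝ) < (β / t) ^ β := Real.rpow_pos_of_pos (by positivity) _
      have h3 : (0:ℝ) < ((Nat.factorial n : ℝ)) ^ β :=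
        Real.rpow_pos_of_pos (by exact_mod_cast n.factorial_pos) _
      positivity
    have h2 : ‖u n‖ ^ 2 ≤ (C * ((β / t) ^ β) ^ n * ((Nat.factorial n : ℝ)) ^ β) ^ 2 :=
      (ENNReal.ofReal_le_ofReal_iff (by positivity)).mp h1
    have h3 := Real.sqrt_le_sqrt h2
    rwa [Real.sqrt_sq (norm_nonneg _), Real.sqrt_sq hRnn] at h3
  have hfin_of : ∀ (f : X) (t : ℝ), 0 < t → (∃ C : ℝ, 0 < C ∧ ∀ n : ℕ,
      (∫⁻ l : ℝ, ENNReal.ofReal (l ^ (2 * n)) ∂(μ f)) ≤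
        ENNReal.ofReal ((C * ((β / t) ^ β) ^ n * ((Nat.factorial n : ℝ)) ^ β) ^ 2)) →
      ∃ u : ℕ → X, IterSeq A f u := by
    intro f t ht ⟨C, hC0, hMom⟩
    exact hE.iter_dom f fun n => lt_of_le_of_lt (hMom n) ENNReal.ofReal_lt_top
  constructor
  · ext f
    simp only [Set.mem_setOf_eq]
    constructor
    · rintro ⟨u, hu, α, hα, c, hc, hb⟩
      have hM := hmom_of_bound f u hu c α hb
      set s : ℝ := 1 / (2 * α ^ 2) with hsdef
      have hs : (0:ℝ) < s := by positivity
      have hsα : s * α ^ 2 ≤ 1 / 2 := by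
        rw [hsdef]; rw [div_mul_eq_mul_div, one_mul]
        rw [div_le_div_iff₀ (by positivity) (by norm_num)]
        ring_nf; nlinarith [sq_nonneg α]
      refine ⟨β / Real.exp 1 * s ^ (1 / (2 * β)), by positivity, ?_⟩
      show (∫⁻ l : ℝ, ENNReal.ofReal
        ((Real.exp ((β / Real.exp 1 * s ^ (1 / (2 * β))) * |l| ^ (1 / β))) ^ 2) ∂(μ f)) < ⊤
      exact expIntegrable hβ hs hα hsα hM
    · rintro ⟨t, ht, hmem⟩
      have key := hback f t ht hmem
      obtain ⟨u, hu⟩ := hfin_of f t ht key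
      obtain ⟨C, hC0, hb⟩ := hseq_of f t ht key u hu
      exact ⟨u, hu, (β / t) ^ β, Real.rpow_pos_of_pos (by positivity) _, C, hC0, hb⟩
  · ext f
    simp only [Set.mem_setOf_eq]
    constructor
    · rintro ⟨u, hu, hall⟩
      intro t ht
      set s : ℝ := (Real.exp 1 * t / β) ^ (2 * β) with hsdef
      have hs : (0:ℝ) < s := Real.rpow_pos_of_pos (by positivity) _
      have hseq : β / Real.exp 1 * s ^ (1 / (2 * β)) = t := by
        rw [hsdef, one_div, Real.rpow_rpow_inv (by positivity) (by positivity)]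
        field_simp
      set α : ℝ := Real.sqrt (1 / (2 * s)) with hαdef
      have hα : (0:ℝ) < α := Real.sqrt_pos.mpr (by positivity)
      have hsα : s * α ^ 2 ≤ 1 / 2 := by
        rw [hαdef, Real.sq_sqrt (by positivity)]
        rw [mul_one_div, div_le_div_iff₀ (by positivity) (by norm_num)]
        ring_nf
        nlinarith [hs]
      obtain ⟨c, hc, hb⟩ := hall α hα
      have hM := hmom_of_bound f u hu c α hb
      have := expIntegrable hβ hs hα hsα hM
      rw [hseq] at this
      exact this
    · intro hmem
      have key1 := hback f 1 one_pos (hmem 1 one_pos)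
      obtain ⟨u, hu⟩ := hfin_of f 1 one_pos key1
      refine ⟨u, hu, ?_⟩
      intro α hα
      set t : ℝ := β / α ^ (1 / β) with htdef
      have hαr : (0:ℝ) < α ^ (1 / β) := Real.rpow_pos_of_pos hα _
      have ht : (0:ℝ) < t := by positivity
      have hαt : (β / t) ^ β = α := by
        have h1 : β / t = α ^ (1 / β) := by
          rw [htdef]
          field_simp
        rw [h1, one_div, Real.rpow_inv_rpow hα.le (ne_of_gt hβ)]
      have key := hback f t ht (hmem t ht)
      obtain ⟨C, hC0, hb⟩ := hseq_of f t ht key u hu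
      rw [hαt] at hb
      exact ⟨C, hC0, hb⟩
end
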